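/- Let a, b, c ∈ 𝔽_q[T] with gcd(a, b, c) = 1 and deg b < deg a ≤ deg c (so a ≠ 0), and set Δ := b² − 4ac. Assume deg Δ is odd or the leading coefficient of Δ is not a square in 𝔽_q. Let L be any field equipped with a nonarchimedean multiplicative absolute value |·| and a ring embedding ι : F_∞ → L satisfying |ι(f)| = |f| for all f ∈ F_∞, and suppose s ∈ L satisfies s² = ι(e(Δ)). Set z := (ι(e(−b)) + s) / ι(e(2a)). Then |z − ι(w)| ≥ |z| for every w ∈ F_∞ — so the imaginary part |z|_i := inf_{w ∈ F_∞} |z − ι(w)| equals |z| — and moreover 1 ≤ |z| ≤ q^{(deg Δ)/2}. -/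

import Mathlib

open Polynomial

/-- The ring homomorphism `e : 𝔽_q[T] → F_∞ = 𝔽_q((X))` sending `T` to `X⁻¹`, realizing
the completion of `𝔽_q(T)` at the place `1/T`. -/
noncomputable def polyToLaurent (Fq : Type) [Field Fq] :
    Polynomial Fq →+* LaurentSeries Fq :=
  Polynomial.eval₂RingHom (HahnSeries.C : Fq →+* LaurentSeries Fq)
    (HahnSeries.single (1 : ℤ) (1 : Fq))⁻¹

open Classical in
/-- The normalized absolute value on `F_∞ = 𝔽_q((X))`: `|f| := q^{−ord f}` for `f ≠ 0`,
and `|0| := 0`; in particular `|e a| = q^{deg a}` for nonzero `a ∈ 𝔽_q[T]`. -/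
noncomputable def laurentAbs (Fq : Type) [Field Fq] [Fintype Fq] :
    LaurentSeries Fq → ℝ :=
  fun f => if f = 0 then 0 else (Fintype.card Fq : ℝ) ^ (-f.order)


section PolyToLaurentHelpers

variable {Fq : Type} [Field Fq]

lemma inv_single : (HahnSeries.single (1 : ℤ) (1 : Fq))⁻¹ = HahnSeries.single (-1 : ℤ) (1 : Fq) := by
  refine inv_eq_of_mul_eq_one_right ?_
  rw [HahnSeries.single_mul_single]
  norm_num

lemma e_eq_sum (p : Polynomial Fq) :
    polyToLaurent Fq p = p.sum fun n a => HahnSeries.single (-(n : ℤ)) a := by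
  rw [polyToLaurent, coe_eval₂RingHom, Polynomial.eval₂_eq_sum]
  refine Finset.sum_congr rfl fun n _ => ?_
  simp [inv_single, HahnSeries.single_pow, HahnSeries.C_apply, HahnSeries.single_mul_single]

lemma coeff_e (p : Polynomial Fq) (n : ℤ) :
    (polyToLaurent Fq p).coeff n = if n ≤ 0 then p.coeff (-n).toNat else 0 := by
  rw [e_eq_sum, Polynomial.sum]
  have hsum : (∑ i ∈ p.support, HahnSeries.single (-(i : ℤ)) (p.coeff i)).coeff n
      = ∑ i ∈ p.support, (HahnSeries.single (-(i : ℤ)) (p.coeff i)).coeff n :=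
    map_sum (HahnSeries.coeff.addMonoidHom n) _ _
  rw [hsum]
  split_ifs with hn
  · rcases Int.exists_eq_neg_ofNat hn with ⟨k, rfl⟩
    have htn : (-(-(k : ℤ))).toNat = k := by omega
    rw [htn]
    rw [Finset.sum_eq_single k (fun i _ hik => HahnSeries.coeff_single_of_ne (by omega))
      (fun hk => by rw [Polynomial.notMem_support_iff.mp hk]; simp)]
    exact HahnSeries.coeff_single_same _ _
  · refine Finset.sum_eq_zero fun i _ => HahnSeries.coeff_single_of_ne (by omega)

lemma coeff_e_lead {p : Polynomial Fq} :
    (polyToLaurent Fq p).coeff (-(p.natDegree : ℤ)) = p.leadingCoeff := by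
  rw [coeff_e, if_pos (by omega : -(p.natDegree : ℤ) ≤ 0), neg_neg, Int.toNat_natCast,
    Polynomial.leadingCoeff]

lemma e_ne_zero {p : Polynomial Fq} (hp : p ≠ 0) : polyToLaurent Fq p ≠ 0 := by
  intro h
  apply hp
  have := coeff_e_lead (p := p)
  rw [h] at this
  simpa using (Polynomial.leadingCoeff_eq_zero.mp this.symm)

lemma order_e {p : Polynomial Fq} (hp : p ≠ 0) :
    (polyToLaurent Fq p).order = -(p.natDegree : ℤ) := by
  refine le_antisymm (HahnSeries.order_le_of_coeff_ne_zero ?_) ?_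
  · rw [coeff_e_lead]; exact Polynomial.leadingCoeff_ne_zero.mpr hp
  · by_contra h
    push_neg at h
    have hne : (polyToLaurent Fq p).coeff (polyToLaurent Fq p).order ≠ 0 :=
      HahnSeries.coeff_order_eq_zero.not.mpr (e_ne_zero hp)
    rw [coeff_e] at hne
    have h0 : (polyToLaurent Fq p).order ≤ 0 := by omega
    rw [if_pos h0] at hne
    exact hne (Polynomial.coeff_eq_zero_of_natDegree_lt (by omega))

lemma leadingCoeff_e {p : Polynomial Fq} (hp : p ≠ 0) :
    (polyToLaurent Fq p).leadingCoeff = p.leadingCoeff := by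
  rw [HahnSeries.leadingCoeff_eq, order_e hp, coeff_e_lead]

variable [Fintype Fq]

lemma laurentAbs_nonneg (f : LaurentSeries Fq) : 0 ≤ laurentAbs Fq f := by
  rw [laurentAbs]
  split_ifs <;> positivity

lemma laurentAbs_of_ne {f : LaurentSeries Fq} (hf : f ≠ 0) :
    laurentAbs Fq f = (Fintype.card Fq : ℝ) ^ (-f.order) := if_neg hf

lemma one_lt_card : (1 : ℝ) < (Fintype.card Fq : ℝ) := by
  exact_mod_cast Fintype.one_lt_card

lemma laurentAbs_pos {f : LaurentSeries Fq} (hf : f ≠ 0) : 0 < laurentAbs Fq f := by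
  rw [laurentAbs_of_ne hf]
  exact zpow_pos (by positivity) _

lemma laurentAbs_e {p : Polynomial Fq} (hp : p ≠ 0) :
    laurentAbs Fq (polyToLaurent Fq p) = (Fintype.card Fq : ℝ) ^ (p.natDegree : ℤ) := by
  rw [laurentAbs_of_ne (e_ne_zero hp), order_e hp, neg_neg]

lemma laurentAbs_mul (f g : LaurentSeries Fq) :
    laurentAbs Fq (f * g) = laurentAbs Fq f * laurentAbs Fq g := by
  rcases eq_or_ne f 0 with rfl | hf
  · simp [laurentAbs]
  rcases eq_or_ne g 0 with rfl | hg
  · simp [laurentAbs]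
  rw [laurentAbs_of_ne hf, laurentAbs_of_ne hg, laurentAbs_of_ne (mul_ne_zero hf hg),
    HahnSeries.order_mul hf hg, neg_add, zpow_add₀ (by positivity)]

lemma ultra_add_eq {L : Type} [Field L] (v : AbsoluteValue L ℝ)
    (hna : ∀ x y : L, v (x + y) ≤ max (v x) (v y)) {x y : L} (h : v x < v y) :
    v (x + y) = v y := by
  refine le_antisymm ((hna x y).trans (max_le h.le le_rfl)) ?_
  have h2 := hna (x + y) (-x)
  rw [show x + y + -x = y by ring, v.map_neg] at h2
  rcases le_max_iff.mp h2 with h3 | h3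
  · exact h3
  · exact absurd h3 (not_le.mpr h)


end PolyToLaurentHelpers

/-- Let `a, b, c ∈ 𝔽_q[T]` with `gcd(a, b, c) = 1` and `deg b < deg a ≤ deg c` (so `a ≠ 0`),
and set `Δ := b² − 4ac`.  Assume `deg Δ` is odd or the leading coefficient of `Δ` is not a
square in `𝔽_q`.  Let `L` be any field equipped with a nonarchimedean multiplicative
absolute value `|·|` and a ring embedding `ι : F_∞ → L` satisfying `|ι f| = |f|`, and
suppose `s ∈ L` satisfies `s² = ι (e Δ)`.  Set `z := (ι (e (−b)) + s) / ι (e (2a))`.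
Then `|z − ι w| ≥ |z|` for every `w ∈ F_∞` — so the imaginary part
`|z|_i := inf_{w ∈ F_∞} |z − ι w|` equals `|z|` — and moreover `1 ≤ |z| ≤ q^{(deg Δ)/2}`. -/
theorem stmt_9 (Fq : Type) [Field Fq] [Fintype Fq]
    (hq : Odd (Fintype.card Fq))
    (a b c Δ : Polynomial Fq)
    (hgcd : ∀ d : Polynomial Fq, d ∣ a → d ∣ b → d ∣ c → IsUnit d)
    (hba : b.degree < a.degree) (hac : a.degree ≤ c.degree)
    (hΔ : Δ = b ^ 2 - 4 * a * c)
    (him : Odd Δ.natDegree ∨ ¬ ∃ x : Fq, x ^ 2 = Δ.leadingCoeff)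
    (L : Type) [Field L] (v : AbsoluteValue L ℝ)
    (hna : ∀ x y : L, v (x + y) ≤ max (v x) (v y))
    (ι : LaurentSeries Fq →+* L)
    (hι : ∀ f : LaurentSeries Fq, v (ι f) = laurentAbs Fq f)
    (s : L) (hs : s ^ 2 = ι (polyToLaurent Fq Δ))
    (z : L) (hz : z = (ι (polyToLaurent Fq (-b)) + s) / ι (polyToLaurent Fq (2 * a))) :
    (∀ w : LaurentSeries Fq, v z ≤ v (z - ι w)) ∧
    sInf (Set.range fun w : LaurentSeries Fq => v (z - ι w)) = v z ∧
    1 ≤ v z ∧ v z ≤ (Fintype.card Fq : ℝ) ^ ((Δ.natDegree : ℝ) / 2) := by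
  set q : ℝ := ((Fintype.card Fq : ℕ) : ℝ) with hqdef
  have hq1 : (1:ℝ) < q := one_lt_card
  have hq0 : (0:ℝ) < q := lt_trans one_pos hq1
  -- nonzeroness
  have ha : a ≠ 0 := by
    intro h; rw [h, degree_zero] at hba; exact not_lt_bot hba
  have hc : c ≠ 0 := by
    intro h; rw [h, degree_zero] at hac
    exact ha (degree_eq_bot.mp (le_bot_iff.mp hac))
  have h2 : (2 : Fq) ≠ 0 := by
    intro h
    have hdvd : ringChar Fq ∣ 2 := by
      have := ringChar.dvd (by exact_mod_cast h : ((2:ℕ) : Fq) = 0)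
      exact this
    have hchar : ringChar Fq = 2 := by
      rcases (Nat.dvd_prime Nat.prime_two).mp hdvd with h1 | h1
      · exact absurd h1 (CharP.ringChar_ne_one)
      · exact h1
    have := FiniteField.even_card_iff_char_two.mp hchar
    rcases hq with ⟨k, hk⟩
    omega
  have h4 : (4 : Fq) ≠ 0 := by
    have h44 : (4:Fq) = 2 * 2 := by norm_num
    rw [h44]; exact mul_ne_zero h2 h2
  have h2p : (2 : Polynomial Fq) ≠ 0 := by
    intro h
    have := congrArg (Polynomial.eval 0) h
    simp at this
    exact h2 this
  have h2a : 2 * a ≠ 0 := mul_ne_zero h2p ha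
  -- degree computations
  have hdeg4 : (4 * a * c).degree = a.degree + c.degree := by
    rw [mul_assoc, show (4 : Polynomial Fq) = C (4:Fq) from (map_ofNat C 4).symm,
      degree_mul, degree_mul, degree_C h4, zero_add]
  have hb2lt : (b^2).degree < (4*a*c).degree := by
    rw [hdeg4, sq, degree_mul]
    rcases eq_or_ne b 0 with rfl | hb
    · simp only [degree_zero]
      rw [degree_eq_natDegree ha, degree_eq_natDegree hc, ← Nat.cast_add]
      exact WithBot.bot_lt_coe _
    · have hnb : b.natDegree < a.natDegree := natDegree_lt_natDegree hb hba
      have hnac : a.natDegree ≤ c.natDegree := natDegree_le_natDegree hac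
      rw [degree_eq_natDegree ha, degree_eq_natDegree hc, degree_eq_natDegree hb,
        ← Nat.cast_add, ← Nat.cast_add]
      exact_mod_cast by omega
  have hΔdeg : Δ.degree = a.degree + c.degree := by
    rw [hΔ, degree_sub_eq_right_of_degree_lt hb2lt, hdeg4]
  have hΔ0 : Δ ≠ 0 := by
    intro h
    rw [h, degree_zero, degree_eq_natDegree ha, degree_eq_natDegree hc, ← Nat.cast_add] at hΔdeg
    exact (WithBot.bot_ne_coe) hΔdeg
  have hdnat : Δ.natDegree = a.natDegree + c.natDegree := by
    have := hΔdeg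
    rw [degree_eq_natDegree hΔ0, degree_eq_natDegree ha, degree_eq_natDegree hc,
      ← Nat.cast_add] at this
    exact_mod_cast this
  have hnac : a.natDegree ≤ c.natDegree := natDegree_le_natDegree hac
  set d : ℕ := Δ.natDegree with hddef
  -- v s facts
  have hvs2 : v s ^ 2 = q ^ (d:ℤ) := by
    rw [← map_pow, hs, hι, laurentAbs_e hΔ0]
  have hvs_pos : 0 < v s := by
    rcases (v.nonneg s).lt_or_eq with h | h
    · exact h
    · exfalso
      have : (0:ℝ) < q ^ (d:ℤ) := zpow_pos hq0 _
      rw [← hvs2, ← h] at this; simp at this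
  have hve : ∀ p : Polynomial Fq, p ≠ 0 → v (ι (polyToLaurent Fq p)) = q ^ (p.natDegree : ℤ) :=
    fun p hp => by rw [hι, laurentAbs_e hp]
  have hne : ∀ p : Polynomial Fq, p ≠ 0 → ι (polyToLaurent Fq p) ≠ 0 := fun p hp =>
    v.ne_zero_iff.mp (by rw [hve p hp]; positivity)
  -- KEY CLAIM
  have key : ∀ u : LaurentSeries Fq, v s ≤ v (ι u + s) := by
    intro u
    by_contra hlt
    push_neg at hlt
    have hle1 : v (ι u) ≤ v s := by
      have h := hna (ι u + s) (-s)
      rw [show ι u + s + -s = ι u by ring, v.map_neg] at h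
      exact h.trans (max_le hlt.le le_rfl)
    have hle2 : v s ≤ v (ι u) := by
      have h := hna (ι u + s) (-ι u)
      rw [show ι u + s + -ι u = s by ring, v.map_neg] at h
      rcases le_max_iff.mp h with h3 | h3
      · linarith
      · exact h3
    have hvu : v (ι u) = v s := le_antisymm hle1 hle2
    have hu0 : u ≠ 0 := by
      intro h; rw [h, map_zero, v.map_zero] at hvu; linarith
    have habs : laurentAbs Fq (u * u) = laurentAbs Fq (polyToLaurent Fq Δ) := by
      rw [laurentAbs_mul, ← hι, hvu, laurentAbs_e hΔ0, ← sq, hvs2]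
    have hord : u.order + u.order = -(d:ℤ) := by
      have h1 := habs
      rw [laurentAbs_of_ne (mul_ne_zero hu0 hu0), laurentAbs_of_ne (e_ne_zero hΔ0),
        HahnSeries.order_mul hu0 hu0, order_e hΔ0] at h1
      have := zpow_right_injective₀ hq0 (ne_of_gt hq1) h1
      omega
    rcases him with hodd | hsq
    · rcases hodd with ⟨k, hk⟩
      omega
    · apply hsq
      have h2L : v (2 : L) = 1 := by
        have h2e : (2 : L) = ι (polyToLaurent Fq (2 : Polynomial Fq)) := by
          rw [map_ofNat, map_ofNat]
        rw [h2e, hve 2 h2p]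
        simp
      have hms : v (ι u - s) ≤ v s := by
        have h := hna (ι u + s) (-(2*s))
        rw [show ι u + s + -(2*s) = ι u - s by ring, v.map_neg] at h
        have h2s : v (2 * s) = v s := by rw [v.map_mul, h2L, one_mul]
        rw [h2s] at h
        exact h.trans (max_le hlt.le le_rfl)
      have hsub : laurentAbs Fq (u*u - polyToLaurent Fq Δ) < q ^ (d:ℤ) := by
        rw [← hι, map_sub]
        have hfac : ι (u*u) - ι (polyToLaurent Fq Δ) = (ι u + s) * (ι u - s) := by
          rw [← hs, map_mul]; ring
        rw [hfac, v.map_mul]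
        calc v (ι u + s) * v (ι u - s) ≤ v (ι u + s) * v s :=
              mul_le_mul_of_nonneg_left hms (v.nonneg _)
          _ < v s * v s := mul_lt_mul_of_pos_right hlt hvs_pos
          _ = q ^ (d:ℤ) := by rw [← sq, hvs2]
      have hDco : (polyToLaurent Fq Δ).coeff (-(d:ℤ)) = Δ.leadingCoeff := coeff_e_lead
      have hco : (u * u).coeff (-(d:ℤ)) = Δ.leadingCoeff := by
        rcases eq_or_ne (u*u - polyToLaurent Fq Δ) 0 with hzero | hne
        · rw [sub_eq_zero.mp hzero, hDco]
        · rw [laurentAbs_of_ne hne] at hsub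
          have hordlt : -(d:ℤ) < (u*u - polyToLaurent Fq Δ).order := by
            have := (zpow_right_strictMono₀ hq1).lt_iff_lt.mp hsub
            omega
          have h0 := HahnSeries.coeff_eq_zero_of_lt_order hordlt
          rw [HahnSeries.coeff_sub] at h0
          rw [sub_eq_zero.mp h0, hDco]
      have hmc := HahnSeries.coeff_mul_order_add_order u u
      rw [hord, hco] at hmc
      exact ⟨u.leadingCoeff, by rw [sq, ← hmc]⟩
  -- v z computation
  have hn2a : (2 * a).natDegree = a.natDegree := by
    rw [natDegree_mul h2p ha]
    simp
  have hden : v (ι (polyToLaurent Fq (2*a))) = q ^ (a.natDegree : ℤ) := by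
    rw [hve _ h2a, hn2a]
  have hden_pos : (0:ℝ) < q ^ (a.natDegree : ℤ) := zpow_pos hq0 _
  have hden0 : ι (polyToLaurent Fq (2*a)) ≠ 0 := by
    intro h
    rw [h, v.map_zero] at hden
    linarith
  have hnum : v (ι (polyToLaurent Fq (-b)) + s) = v s := by
    rcases eq_or_ne b 0 with rfl | hb
    · rw [neg_zero, map_zero, map_zero, zero_add]
    · have hnb : b.natDegree < a.natDegree := natDegree_lt_natDegree hb hba
      have hlt2 : 2 * b.natDegree < d := by omega
      have h1 : v (ι (polyToLaurent Fq (-b))) = q ^ (b.natDegree : ℤ) := by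
        rw [hve _ (neg_ne_zero.mpr hb), natDegree_neg]
      have hltvs : v (ι (polyToLaurent Fq (-b))) < v s := by
        rw [h1]
        by_contra hcon
        push_neg at hcon
        have e1 : (q ^ (b.natDegree:ℤ))^2 = q ^ (2*(b.natDegree:ℤ)) := by
          rw [two_mul, zpow_add₀ (ne_of_gt hq0), sq]
        have hsq2 : (v s)^2 ≤ (q ^ (b.natDegree:ℤ))^2 := by
          apply pow_le_pow_left₀ (v.nonneg s) hcon
        rw [hvs2, e1] at hsq2
        have := (zpow_right_strictMono₀ hq1).lt_iff_lt.mpr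
          (show 2*(b.natDegree:ℤ) < (d:ℤ) by omega)
        linarith
      exact ultra_add_eq v hna hltvs
  have hvz : v z = v s / q ^ (a.natDegree : ℤ) := by
    rw [hz, map_div₀, hnum, hden]
  -- part 1
  have part1 : ∀ w : LaurentSeries Fq, v z ≤ v (z - ι w) := by
    intro w
    have hmap : ι (polyToLaurent Fq (-b) - polyToLaurent Fq (2*a) * w)
        = ι (polyToLaurent Fq (-b)) - ι (polyToLaurent Fq (2*a)) * ι w := by
      rw [map_sub ι, map_mul ι]
    have hzw : z - ι w =
        (ι (polyToLaurent Fq (-b) - polyToLaurent Fq (2*a) * w) + s) /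
          ι (polyToLaurent Fq (2*a)) := by
      rw [hz, hmap]
      field_simp [hne 2 h2p, hne a ha]
      ring
    rw [hzw, map_div₀, hden, hvz]
    exact div_le_div_of_nonneg_right (key _) hden_pos.le
  refine ⟨part1, ?_, ?_, ?_⟩
  · refine IsLeast.csInf_eq ⟨⟨0, by simp⟩, ?_⟩
    rintro x ⟨w, rfl⟩
    exact part1 w
  · have e2 : (q ^ (a.natDegree:ℤ))^2 = q ^ (2*(a.natDegree:ℤ)) := by
      rw [two_mul, zpow_add₀ (ne_of_gt hq0), sq]
    have hz2 : (v z)^2 = q ^ ((d:ℤ) - 2*(a.natDegree:ℤ)) := by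
      rw [hvz, div_pow, hvs2, e2, ← zpow_sub₀ (ne_of_gt hq0)]
    have h1le : (1:ℝ) ≤ (v z)^2 := by
      rw [hz2]
      exact one_le_zpow₀ hq1.le (by omega)
    nlinarith [v.nonneg z]
  · have hvs_eq : v s = q ^ ((d:ℝ)/2) := by
      have hR : (0:ℝ) < q ^ ((d:ℝ)/2) := Real.rpow_pos_of_pos hq0 _
      have hr2 : (q ^ ((d:ℝ)/2))^2 = q ^ (d:ℤ) := by
        rw [← Real.rpow_natCast (q ^ ((d:ℝ)/2)) 2, ← Real.rpow_mul hq0.le]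
        norm_num
      have hfac : (v s - q ^ ((d:ℝ)/2)) * (v s + q ^ ((d:ℝ)/2)) = 0 := by
        linear_combination hvs2 - hr2
      rcases mul_eq_zero.mp hfac with h | h
      · linarith
      · linarith
    rw [hvz, ← hvs_eq]
    have hge1 : (1:ℝ) ≤ q ^ (a.natDegree:ℤ) := one_le_zpow₀ hq1.le (by positivity)
    exact div_le_self hvs_pos.le hge1
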